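/- The complex number (-1 + √-7)/(2√2) has absolute value 1 but is not a root of unity. -/

import Mathlib

noncomputable def uu : ℂ := (-1 + Complex.I * Real.sqrt 7) / 2

lemma h7c : ((Real.sqrt 7 : ℝ) : ℂ)^2 = 7 := by
  norm_cast
  rw [Real.sq_sqrt]; norm_num

lemma uu_sq : uu^2 = -uu - 2 := by
  unfold uu
  have hI : Complex.I^2 = -1 := Complex.I_sq
  field_simp
  linear_combination (((Real.sqrt 7:ℝ):ℂ)^2) * hI - h7c

lemma uu_pow (n : ℕ) (hn : 0 < n) : ∃ a b : ℤ, Even a ∧ Odd b ∧ uu^n = a + b * uu := by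
  induction n with
  | zero => omega
  | succ m ih =>
    rcases Nat.eq_zero_or_pos m with hm | hm
    · subst hm
      exact ⟨0, 1, Even.zero, odd_one, by push_cast; ring⟩
    · obtain ⟨a, b, ha, hb, h⟩ := ih hm
      refine ⟨-2*b, a - b, ⟨-b, by ring⟩, ha.sub_odd hb, ?_⟩
      have : uu^(m+1) = uu^m * uu := by ring
      rw [this, h]
      push_cast
      linear_combination (b : ℂ) * uu_sq

lemma uu_im : uu.im = Real.sqrt 7 / 2 := by
  simp [uu, Complex.div_im]

theorem not_root_of_unity :
    ‖(-1 + Complex.I * Real.sqrt 7) / (2 * Real.sqrt 2)‖ = 1 ∧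
    ∀ n : ℕ, 0 < n →
      ((-1 + Complex.I * Real.sqrt 7) / (2 * Real.sqrt 2)) ^ n ≠ 1 := by
  have s2pos : (0:ℝ) < Real.sqrt 2 := Real.sqrt_pos.mpr (by norm_num)
  have s7pos : (0:ℝ) < Real.sqrt 7 := Real.sqrt_pos.mpr (by norm_num)
  have s2sq : Real.sqrt 2 ^ 2 = 2 := Real.sq_sqrt (by norm_num)
  have s7sq : Real.sqrt 7 ^ 2 = 7 := Real.sq_sqrt (by norm_num)
  constructor
  · rw [norm_div]
    have habs : ‖(-1 + Complex.I * Real.sqrt 7)‖ = 2 * Real.sqrt 2 := by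
      rw [Complex.norm_def, Complex.normSq_apply]
      simp
      rw [show (1 : ℝ) + 7 = (2 * Real.sqrt 2)^2 by nlinarith]
      exact Real.sqrt_sq (by positivity)
    rw [habs]
    rw [show ((2 : ℂ) * Real.sqrt 2) = ((2 * Real.sqrt 2 : ℝ) : ℂ) by push_cast; ring]
    rw [Complex.norm_real, Real.norm_eq_abs, abs_of_pos (by positivity)]
    field_simp
  · intro n hn hpow
    set z : ℂ := (-1 + Complex.I * Real.sqrt 7) / (2 * Real.sqrt 2) with hz
    have hzu : uu = (Real.sqrt 2 : ℂ) * z := by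
      rw [hz, uu]
      have : ((Real.sqrt 2 : ℝ) : ℂ) ≠ 0 := by
        simp [s2pos.ne']
      field_simp
    have hun : uu ^ n = ((Real.sqrt 2 ^ n : ℝ) : ℂ) := by
      rw [hzu, mul_pow, hpow, mul_one]
      push_cast
      ring
    obtain ⟨a, b, ha, hb, h⟩ := uu_pow n hn
    have him : (uu ^ n).im = b * (Real.sqrt 7 / 2) := by
      rw [h]
      simp [uu_im]
    have hb0 : b ≠ 0 := by
      rintro rfl
      exact (by norm_num : ¬ Odd (0:ℤ)) hb
    have hzero : (b:ℝ) * (Real.sqrt 7 / 2) = 0 := by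
      rw [← him, hun, Complex.ofReal_im]
    rcases mul_eq_zero.mp hzero with h1 | h2
    · exact hb0 (by exact_mod_cast h1)
    · have : Real.sqrt 7 = 0 := by linarith
      exact s7pos.ne' this
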